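/- Under Assumption (a), let r ∈ Σ_m and let p_0 ∈ ℝ^{Z_m} maximize p ↦ Ξ_μ(p) − Σ_z p_z r_z. Then every minimizer (μ_z) ∈ 𝒫_X^r(μ) of Σ_{z∈Z_m} ∫_X c¹(x,z) dμ_z(x) satisfies μ_z = μ restricted to A_z(p_0) for every z ∈ Z_m; in particular the minimizing partition is unique and is a strong partition (each μ_z is the restriction of μ to a Borel set, these sets being μ-essentially disjoint with union X). -/

import Mathlib

open MeasureTheory

/-- Under Assumption (a), if `p₀` maximizes `p ↦ Ξ_μ(p) − Σ_z p_z r_z`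
then every minimizing partition `(μ_z) ∈ 𝒫_X^r(μ)` of `Σ_z ∫ c¹(x,z) dμ_z` satisfies
`μ_z = μ` restricted to `A_z(p₀)`; in particular the minimizer is a unique strong
partition. -/
theorem stmt_9
    {X : Type*} [TopologicalSpace X] [PolishSpace X] [MeasurableSpace X] [BorelSpace X]
    {ι : Type*} [Fintype ι] [Nonempty ι]
    (μ : Measure X) [IsProbabilityMeasure μ]
    (c1 : X → ι → ℝ)
    (hc1 : ∀ z, Continuous fun x => c1 x z) (hb1 : ∀ z, ∃ M, ∀ x, |c1 x z| ≤ M)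
    (hatomless : ∀ x : X, μ {x} = 0)
    (hlevel : ∀ (t : ℝ) (z z' : ι), z ≠ z' → μ {x | c1 x z - c1 x z' = t} = 0)
    (r : ι → ℝ) (hr : ∀ z, 0 ≤ r z) (hr1 : ∑ z, r z = 1)
    (p0 : ι → ℝ)
    (hp0 : ∀ p : ι → ℝ,
      (∫ x, (⨅ z, c1 x z + p z) ∂μ) - ∑ z, p z * r z
        ≤ (∫ x, (⨅ z, c1 x z + p0 z) ∂μ) - ∑ z, p0 z * r z)
    (μv : ι → Measure X)
    (hsum : (∑ z, μv z) = μ)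
    (hmass : ∀ z, μv z Set.univ = ENNReal.ofReal (r z))
    (hmin : ∀ μv' : ι → Measure X,
      (∑ z, μv' z) = μ → (∀ z, μv' z Set.univ = ENNReal.ofReal (r z)) →
      (∑ z, ∫ x, c1 x z ∂(μv z)) ≤ ∑ z, ∫ x, c1 x z ∂(μv' z)) :
    ∀ z : ι, μv z = μ.restrict {x : X | c1 x z + p0 z = ⨅ w, (c1 x w + p0 w)} := by
  classical
  have hX : Nonempty X := by
    by_contra h
    rw [not_nonempty_iff] at h
    have h1 : μ Set.univ = 1 := measure_univ
    rw [Set.eq_empty_of_isEmpty (Set.univ : Set X), measure_empty] at h1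
    exact one_ne_zero h1.symm
  choose M hM using hb1
  have hM0 : ∀ z, 0 ≤ M z := fun z => le_trans (abs_nonneg _) (hM z hX.some)
  set ξ : X → ℝ := fun x => ⨅ w, c1 x w + p0 w with hξdef
  set A : ι → Set X := fun z => {x : X | c1 x z + p0 z = ξ x} with hAdef
  have hmeasc : ∀ z, Measurable fun x => c1 x z := fun z => (hc1 z).measurable
  -- generic measurability / bounds / integrability for the inf functions
  have hmeasinf : ∀ p : ι → ℝ, Measurable (fun x => ⨅ w, c1 x w + p w) :=
    fun p => Measurable.iInf fun w => (hmeasc w).add measurable_const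
  have hbdd : ∀ (p : ι → ℝ) (x : X), BddBelow (Set.range fun w => c1 x w + p w) :=
    fun p x => Set.Finite.bddBelow (Set.finite_range _)
  have hinf_le : ∀ (p : ι → ℝ) (x : X) (w : ι), (⨅ w, c1 x w + p w) ≤ c1 x w + p w :=
    fun p x w => ciInf_le (hbdd p x) w
  have hattain : ∀ (p : ι → ℝ) (x : X), ∃ w, c1 x w + p w = ⨅ w, c1 x w + p w :=
    fun p x => exists_eq_ciInf_of_finite
  have habs : ∀ (p : ι → ℝ) (x : X), |⨅ w, c1 x w + p w| ≤ ∑ w, (M w + |p w|) := by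
    intro p x
    have hterm : ∀ w, |c1 x w + p w| ≤ M w + |p w| := fun w =>
      (abs_add_le _ _).trans (add_le_add_left (hM w x) _)
    have hnn : ∀ w, (0:ℝ) ≤ M w + |p w| := fun w => add_nonneg (hM0 w) (abs_nonneg _)
    rw [abs_le]
    constructor
    · apply le_ciInf
      intro w
      have := (abs_le.1 (hterm w)).1
      refine le_trans ?_ this
      simp only [neg_le_neg_iff]
      exact Finset.single_le_sum (fun i _ => hnn i) (Finset.mem_univ w)
    · obtain ⟨w0, hw0⟩ := hattain p x
      rw [← hw0]
      exact le_trans (le_trans (le_abs_self _) (hterm w0))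
        (Finset.single_le_sum (fun i _ => hnn i) (Finset.mem_univ w0))
  have hint : ∀ (p : ι → ℝ) (ν : Measure X), IsFiniteMeasure ν →
      Integrable (fun x => ⨅ w, c1 x w + p w) ν := by
    intro p ν hν
    exact ⟨(hmeasinf p).aestronglyMeasurable,
      HasFiniteIntegral.of_bounded (ae_of_all _ fun x => by
        rw [Real.norm_eq_abs]; exact habs p x)⟩
  have hintc : ∀ (z : ι) (ν : Measure X), IsFiniteMeasure ν →
      Integrable (fun x => c1 x z) ν := by
    intro z ν hν
    exact ⟨(hmeasc z).aestronglyMeasurable,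
      HasFiniteIntegral.of_bounded (ae_of_all _ fun x => by
        rw [Real.norm_eq_abs]; exact hM z x)⟩
  have hξmeas : Measurable ξ := hmeasinf p0
  have hAmeas : ∀ z, MeasurableSet (A z) :=
    fun z => measurableSet_eq_fun ((hmeasc z).add measurable_const) hξmeas
  have hξ_le : ∀ (x : X) (w : ι), ξ x ≤ c1 x w + p0 w := hinf_le p0
  -- cover and a.e.-disjointness
  have hcover : (⋃ z, A z) = Set.univ := by
    ext x
    simp only [Set.mem_iUnion, Set.mem_univ, iff_true]
    obtain ⟨w, hw⟩ := hattain p0 x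
    exact ⟨w, hw⟩
  have hnull : ∀ z z' : ι, z ≠ z' → μ (A z ∩ A z') = 0 := by
    intro z z' hzz
    refine measure_mono_null ?_ (hlevel (p0 z' - p0 z) z z' hzz)
    intro x ⟨h1, h2⟩
    simp only [Set.mem_setOf_eq] at h1 h2 ⊢
    have : c1 x z + p0 z = c1 x z' + p0 z' := by rw [h1, h2]
    linarith
  have hdisj : Pairwise (Function.onFun (MeasureTheory.AEDisjoint μ) A) := fun z z' h => hnull z z' h
  -- step 1: μ (A z) has mass at least r z (first-order condition)
  have hge : ∀ z, r z ≤ (μ (A z)).toReal := by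
    intro z
    set ε : ℕ → ℝ := fun n => 1 / (n + 1) with hεdef
    have hεpos : ∀ n, 0 < ε n := fun n => by positivity
    have hεmul : ∀ n : ℕ, ε n * ((n : ℝ) + 1) = 1 := by
      intro n
      have h : ((n : ℝ) + 1) ≠ 0 := by positivity
      simp only [hεdef]
      field_simp
    set q : ℕ → ι → ℝ := fun n => Function.update p0 z (p0 z - ε n) with hqdef
    set F : ℕ → X → ℝ := fun n x => (ξ x - ⨅ w, c1 x w + q n w) * ((n : ℝ) + 1) with hFdef
    have hq_le : ∀ (n : ℕ) (w : ι), q n w ≤ p0 w := by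
      intro n w
      by_cases h : w = z
      · subst h
        simp only [hqdef, Function.update_self]
        linarith [hεpos n]
      · simp only [hqdef, Function.update_of_ne h, le_refl]
    have hupper : ∀ (n : ℕ) (x : X), (⨅ w, c1 x w + q n w) ≤ ξ x := by
      intro n x
      obtain ⟨w0, hw0⟩ := hattain p0 x
      calc (⨅ w, c1 x w + q n w) ≤ c1 x w0 + q n w0 := hinf_le (q n) x w0
        _ ≤ c1 x w0 + p0 w0 := add_le_add_right (hq_le n w0) _
        _ = ξ x := hw0
    have hlow : ∀ (n : ℕ) (x : X), ξ x - ε n ≤ ⨅ w, c1 x w + q n w := by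
      intro n x
      apply le_ciInf
      intro w
      by_cases h : w = z
      · subst h
        simp only [hqdef, Function.update_self]
        have := hξ_le x w
        linarith
      · simp only [hqdef, Function.update_of_ne h]
        have := hξ_le x w
        linarith [hεpos n]
    have hmem : ∀ (n : ℕ) (x : X), x ∈ A z → (⨅ w, c1 x w + q n w) = ξ x - ε n := by
      intro n x hx
      simp only [hAdef, Set.mem_setOf_eq] at hx
      refine le_antisymm ?_ (hlow n x)
      calc (⨅ w, c1 x w + q n w) ≤ c1 x z + q n z := hinf_le (q n) x z
        _ = ξ x - ε n := by
            simp only [hqdef, Function.update_self]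
            linarith
    have hnotmem : ∀ (n : ℕ) (x : X), ε n < c1 x z + p0 z - ξ x →
        (⨅ w, c1 x w + q n w) = ξ x := by
      intro n x hδ
      refine le_antisymm (hupper n x) ?_
      apply le_ciInf
      intro w
      by_cases h : w = z
      · subst h
        simp only [hqdef, Function.update_self]
        linarith
      · simp only [hqdef, Function.update_of_ne h]
        exact hξ_le x w
    have hF01 : ∀ (n : ℕ) (x : X), 0 ≤ F n x ∧ F n x ≤ 1 := by
      intro n x
      have h1 := hupper n x
      have h2 := hlow n x
      have hn : (0:ℝ) ≤ (n : ℝ) + 1 := by positivity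
      constructor
      · exact mul_nonneg (by linarith) hn
      · calc F n x ≤ ε n * ((n : ℝ) + 1) :=
            mul_le_mul_of_nonneg_right (by linarith) hn
          _ = 1 := hεmul n
    have htend : ∀ x : X, Filter.Tendsto (fun n => F n x) Filter.atTop
        (nhds ((A z).indicator (1 : X → ℝ) x)) := by
      intro x
      by_cases hx : x ∈ A z
      · have heq : ∀ n, F n x = 1 := by
          intro n
          simp only [hFdef, hmem n x hx]
          have := hεmul n
          ring_nf
          ring_nf at this
          linarith
        rw [Set.indicator_of_mem hx]
        exact Filter.Tendsto.congr (fun n => (heq n).symm) tendsto_const_nhds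
      · have hδ : 0 < c1 x z + p0 z - ξ x := by
          have hne : ξ x ≠ c1 x z + p0 z := fun h => hx (by
            simp only [hAdef, Set.mem_setOf_eq]
            exact h.symm)
          have := lt_of_le_of_ne (hξ_le x z) hne
          linarith
        have hε0 : Filter.Tendsto ε Filter.atTop (nhds 0) :=
          tendsto_one_div_add_atTop_nhds_zero_nat
        have hev : ∀ᶠ n in Filter.atTop, F n x = 0 := by
          filter_upwards [hε0.eventually_lt_const hδ] with n hn
          simp only [hFdef, hnotmem n x hn, sub_self, zero_mul]
        rw [Set.indicator_of_notMem hx]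
        exact Filter.Tendsto.congr' (hev.mono fun n h => h.symm) tendsto_const_nhds
    have hFmeas : ∀ n : ℕ, AEStronglyMeasurable (F n) μ := fun n =>
      ((hξmeas.sub (hmeasinf (q n))).mul_const _).aestronglyMeasurable
    have hbound : ∀ n : ℕ, ∀ᵐ x ∂μ, ‖F n x‖ ≤ (1:ℝ) := by
      intro n
      refine ae_of_all _ fun x => ?_
      rw [Real.norm_eq_abs, abs_le]
      exact ⟨by linarith [(hF01 n x).1], (hF01 n x).2⟩
    have hDCT : Filter.Tendsto (fun n => ∫ x, F n x ∂μ) Filter.atTop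
        (nhds (∫ x, (A z).indicator (1 : X → ℝ) x ∂μ)) := by
      exact tendsto_integral_of_dominated_convergence (fun _ => (1:ℝ)) hFmeas
        (integrable_const 1) hbound (ae_of_all _ htend)
    have hind : ∫ x, (A z).indicator (1 : X → ℝ) x ∂μ = (μ (A z)).toReal := by
      rw [integral_indicator_one (hAmeas z), Measure.real_def]
    have hIge : ∀ n : ℕ, r z ≤ ∫ x, F n x ∂μ := by
      intro n
      have hqs : ∑ w, q n w * r w = (∑ w, p0 w * r w) - ε n * r z := by
        have h0 : ∑ w, (q n w * r w - p0 w * r w) = -(ε n * r z) := by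
          rw [Finset.sum_eq_single z]
          · simp only [hqdef, Function.update_self]
            ring
          · intro w _ hw
            simp only [hqdef, Function.update_of_ne hw]
            ring
          · intro h
            exact absurd (Finset.mem_univ z) h
        rw [Finset.sum_sub_distrib] at h0
        linarith
      have hkey := hp0 (q n)
      rw [hqs] at hkey
      have hgap : ε n * r z ≤ (∫ x, ξ x ∂μ) - ∫ x, (⨅ w, c1 x w + q n w) ∂μ := by
        linarith
      have hInt : ∫ x, F n x ∂μ =
          ((∫ x, ξ x ∂μ) - ∫ x, (⨅ w, c1 x w + q n w) ∂μ) * ((n : ℝ) + 1) := by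
        simp only [hFdef]
        rw [integral_mul_const, integral_sub (hint p0 μ inferInstance)
          (hint (q n) μ inferInstance)]
      rw [hInt]
      have hn : (0:ℝ) ≤ (n : ℝ) + 1 := by positivity
      calc r z = ε n * r z * ((n : ℝ) + 1) := by
            rw [mul_comm (ε n) (r z), mul_assoc, hεmul n, mul_one]
        _ ≤ ((∫ x, ξ x ∂μ) - ∫ x, (⨅ w, c1 x w + q n w) ∂μ) * ((n : ℝ) + 1) :=
            mul_le_mul_of_nonneg_right hgap hn
    rw [← hind]
    exact ge_of_tendsto' hDCT hIge
  -- step 2: total masses sum to 1, hence μ (A z) = ofReal (r z)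
  have hmuA : ∀ z, μ (A z) = ENNReal.ofReal (r z) := by
    have h1 : ∑ z, μ (A z) = 1 := by
      rw [← tsum_fintype (L := SummationFilter.unconditional ι), ← measure_iUnion₀ hdisj (fun z => (hAmeas z).nullMeasurableSet),
        hcover, measure_univ]
    have hne : ∀ z : ι, μ (A z) ≠ ⊤ := fun z => measure_ne_top μ _
    have h2 : ∑ z, (μ (A z)).toReal = 1 := by
      rw [← ENNReal.toReal_sum (fun z _ => hne z), h1, ENNReal.toReal_one]
    have h3 : ∀ z ∈ Finset.univ, r z = (μ (A z)).toReal := by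
      refine (Finset.sum_eq_sum_iff_of_le (fun i _ => hge i)).1 ?_
      rw [h2, hr1]
    intro z
    rw [← ENNReal.ofReal_toReal (hne z), ← h3 z (Finset.mem_univ z)]
  -- the candidate strong partition
  set ν : ι → Measure X := fun z => μ.restrict (A z) with hνdef
  have hν_univ : ∀ z, ν z Set.univ = ENNReal.ofReal (r z) := by
    intro z
    rw [hνdef]
    simp only [Measure.restrict_apply_univ]
    exact hmuA z
  have hν_sum : (∑ z, ν z) = μ := by
    ext s hs
    rw [Measure.finset_sum_apply]
    simp only [hνdef, Measure.restrict_apply hs]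
    have hd : Pairwise (Function.onFun (MeasureTheory.AEDisjoint μ) fun z => s ∩ A z) := by
      intro z z' h
      exact measure_mono_null (by intro x hx; exact ⟨hx.1.2, hx.2.2⟩) (hnull z z' h)
    rw [← tsum_fintype (L := SummationFilter.unconditional ι), ← measure_iUnion₀ hd
      (fun z => (hs.inter (hAmeas z)).nullMeasurableSet), ← Set.inter_iUnion, hcover,
      Set.inter_univ]
  -- finiteness
  have hμv_fin : ∀ z, IsFiniteMeasure (μv z) := by
    intro z
    exact ⟨by rw [hmass]; exact ENNReal.ofReal_lt_top⟩
  have hν_fin : ∀ z, IsFiniteMeasure (ν z) := by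
    intro z
    exact ⟨by rw [hν_univ]; exact ENNReal.ofReal_lt_top⟩
  -- the nonnegative gap functions
  set g : ι → X → ℝ := fun z x => c1 x z + p0 z - ξ x with hgdef
  have hg_nonneg : ∀ z x, 0 ≤ g z x := fun z x => by
    simp only [hgdef, sub_nonneg]; exact hξ_le x z
  have hg_int : ∀ (z : ι) (ρ : Measure X), IsFiniteMeasure ρ → Integrable (g z) ρ := by
    intro z ρ hρ
    exact ((hintc z ρ hρ).add (integrable_const _)).sub (hint p0 ρ hρ)
  -- value identity for arbitrary admissible partitions
  have hval : ∀ ρ : ι → Measure X, (∑ z, ρ z) = μ →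
      (∀ z, ρ z Set.univ = ENNReal.ofReal (r z)) →
      (∑ z, ∫ x, g z x ∂(ρ z)) =
        (∑ z, ∫ x, c1 x z ∂(ρ z)) + (∑ z, p0 z * r z) - ∫ x, ξ x ∂μ := by
    intro ρ hρsum hρmass
    have hρfin : ∀ z, IsFiniteMeasure (ρ z) := fun z =>
      ⟨by rw [hρmass]; exact ENNReal.ofReal_lt_top⟩
    have h1 : ∀ z, ∫ x, g z x ∂(ρ z) =
        (∫ x, c1 x z ∂(ρ z)) + p0 z * r z - ∫ x, ξ x ∂(ρ z) := by
      intro z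
      have := hρfin z
      have i1 : Integrable (fun x => c1 x z + p0 z) (ρ z) :=
        (hintc z _ this).add (integrable_const _)
      have e1 : ∫ x, g z x ∂(ρ z)
          = (∫ x, (c1 x z + p0 z) ∂(ρ z)) - ∫ x, ξ x ∂(ρ z) :=
        integral_sub i1 (hint p0 _ this)
      have e2 : ∫ x, (c1 x z + p0 z) ∂(ρ z)
          = (∫ x, c1 x z ∂(ρ z)) + ∫ _, (p0 z : ℝ) ∂(ρ z) :=
        integral_add (hintc z _ this) (integrable_const _)
      have e3 : ∫ _, (p0 z : ℝ) ∂(ρ z) = p0 z * r z := by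
        rw [integral_const, Measure.real_def, hρmass z, smul_eq_mul, ENNReal.toReal_ofReal (hr z), mul_comm]
      rw [e1, e2, e3]
    have h2 : ∑ z, ∫ x, ξ x ∂(ρ z) = ∫ x, ξ x ∂μ := by
      rw [← hρsum, integral_finset_sum_measure]
      intro z _
      exact hint p0 _ (hρfin z)
    calc ∑ z, ∫ x, g z x ∂(ρ z)
        = ∑ z, ((∫ x, c1 x z ∂(ρ z)) + p0 z * r z - ∫ x, ξ x ∂(ρ z)) := by
          exact Finset.sum_congr rfl fun z _ => h1 z
      _ = (∑ z, ∫ x, c1 x z ∂(ρ z)) + (∑ z, p0 z * r z) - ∫ x, ξ x ∂μ := by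
          rw [← h2, Finset.sum_sub_distrib, Finset.sum_add_distrib]
  -- the candidate has zero gap
  have hν_gap : ∀ z, ∫ x, g z x ∂(ν z) = 0 := by
    intro z
    rw [hνdef]
    have : ∀ x ∈ A z, g z x = 0 := by
      intro x hx
      simp only [hgdef]
      simp only [hAdef, Set.mem_setOf_eq] at hx
      rw [hx]; ring
    calc ∫ x, g z x ∂(μ.restrict (A z)) = ∫ x in A z, g z x ∂μ := rfl
      _ = ∫ x in A z, (0:ℝ) ∂μ := by
          exact setIntegral_congr_fun (hAmeas z) this
      _ = 0 := by simp
  -- μv has zero gap on each piece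
  have hμv_gap : ∀ z, ∫ x, g z x ∂(μv z) = 0 := by
    have hsum_le : (∑ z, ∫ x, g z x ∂(μv z)) ≤ 0 := by
      have := hmin ν hν_sum hν_univ
      have e1 := hval μv hsum hmass
      have e2 := hval ν hν_sum hν_univ
      have e3 : (∑ z, ∫ x, g z x ∂(ν z)) = 0 := by
        rw [Finset.sum_congr rfl fun z _ => hν_gap z, Finset.sum_const, smul_zero]
      linarith
    have hnn : ∀ z ∈ Finset.univ, (0:ℝ) ≤ ∫ x, g z x ∂(μv z) := fun z _ =>
      integral_nonneg (hg_nonneg z)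
    have hz : (∑ z, ∫ x, g z x ∂(μv z)) = 0 :=
      le_antisymm hsum_le (Finset.sum_nonneg hnn)
    intro z
    exact (Finset.sum_eq_zero_iff_of_nonneg hnn).1 hz z (Finset.mem_univ z)
  -- hence μv z is concentrated on A z
  have hconc : ∀ z, μv z ((A z)ᶜ) = 0 := by
    intro z
    have := hμv_fin z
    have hae : g z =ᵐ[μv z] 0 :=
      (integral_eq_zero_iff_of_nonneg (hg_nonneg z) (hg_int z _ (hμv_fin z))).1 (hμv_gap z)
    have : μv z {x | g z x ≠ 0} = 0 := by
      have := hae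
      rw [Filter.EventuallyEq, ae_iff] at this
      simpa using this
    refine measure_mono_null ?_ this
    intro x hx
    simp only [hAdef, Set.mem_compl_iff, Set.mem_setOf_eq] at hx ⊢
    simp only [hgdef]
    intro hc
    exact hx (by linarith)
  -- conclude equality of measures
  intro z
  have := hμv_fin z
  have hle : ∀ s : Set X, MeasurableSet s → μv z s ≤ ν z s := by
    intro s hs
    have h1 : μv z s = μv z (s ∩ A z) := by
      apply le_antisymm
      · calc μv z s = μv z ((s ∩ A z) ∪ (s ∩ (A z)ᶜ)) := by
              rw [Set.inter_union_compl]
          _ ≤ μv z (s ∩ A z) + μv z (s ∩ (A z)ᶜ) := measure_union_le _ _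
          _ ≤ μv z (s ∩ A z) + 0 :=
              add_le_add_right (measure_mono_null Set.inter_subset_right (hconc z)).le _
          _ = μv z (s ∩ A z) := add_zero _
      · exact measure_mono Set.inter_subset_left
    have h2 : ∀ t : Set X, μv z t ≤ μ t := by
      intro t
      rw [← hsum, Measure.coe_finset_sum, Finset.sum_apply]
      exact Finset.single_le_sum (f := fun w => μv w t) (fun i _ => zero_le)
        (Finset.mem_univ z)
    calc μv z s = μv z (s ∩ A z) := h1
      _ ≤ μ (s ∩ A z) := h2 _
      _ = ν z s := (Measure.restrict_apply hs).symm
  ext s hs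
  refine le_antisymm (hle s hs) ?_
  have htot : μv z s + μv z sᶜ = ν z s + ν z sᶜ := by
    rw [measure_add_measure_compl hs, measure_add_measure_compl hs, hmass, hν_univ]
  have hd_ne : ν z sᶜ ≠ ⊤ := measure_ne_top _ _
  have : ν z s + ν z sᶜ ≤ μv z s + ν z sᶜ := by
    rw [← htot]
    exact add_le_add_right (hle sᶜ hs.compl) _
  exact (ENNReal.add_le_add_iff_right hd_ne).1 this
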